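/- The global function f_S of the sand automaton S is not injective, not F-injective, and not P-injective: there exist two distinct finite configurations with the same image under f_S, and two distinct periodic configurations with the same image under f_S. -/

import Mathlib

/-- The extended integers `ℤ ∪ {-∞, +∞}`. -/
abbrev EZ : Type := WithBot (WithTop ℤ)

/-- Embedding of `ℤ` into the extended integers. -/
def finVal (n : ℤ) : EZ := ((n : WithTop ℤ) : EZ)

/-- The integer value of a finite extended integer (`0` on `±∞`). -/
def valZ (x : EZ) : ℤ := WithBot.recBotCoe 0 (fun y => WithTop.recTopCoe 0 id y) x

/-- The measuring device `β_l^m`. -/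
noncomputable def beta (l : ℕ) (m : ℤ) (n : EZ) : EZ :=
  if finVal (m + (l : ℤ)) < n then ⊤
  else if n < finVal (m - (l : ℤ)) then ⊥
  else WithBot.map (WithTop.map (fun k => k - m)) n

/-- Reference height: the value of `x` if finite, `0` if `x = ±∞`. -/
def refH (x : EZ) : ℤ := if x = ⊥ ∨ x = ⊤ then 0 else valZ x

/-- One-dimensional sandpile configurations. -/
abbrev Config : Type := ℤ → EZ

/-- The neighborhood sequence `d_r^i(c)`: the `2r`-tuple of measured differences. -/
noncomputable def nbhd (r : ℕ) (c : Config) (i : ℤ) : Fin (2 * r) → EZ :=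
  fun j => beta r (refH (c i))
    (c (i + (if (j : ℕ) < r then ((j : ℕ) : ℤ) - (r : ℤ) else ((j : ℕ) : ℤ) - (r : ℤ) + 1)))

/-- The global function of the sand automaton of radius `r` with local rule `lam`. -/
noncomputable def globalF (r : ℕ) (lam : (Fin (2 * r) → EZ) → ℤ) (c : Config) : Config :=
  fun i => if c i = ⊥ ∨ c i = ⊤ then c i
    else finVal (valZ (c i) + lam (nbhd r c i))

/-- Finite configurations. -/
def FiniteConf (c : Config) : Prop := ∃ k : ℕ, ∀ i : ℤ, (k : ℤ) ≤ |i| → c i = finVal 0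

/-- Periodic configurations. -/
def PeriodicConf (c : Config) : Prop := ∃ p : ℤ, p ≠ 0 ∧ ∀ i : ℤ, c (i + p) = c i


/-- The local rule of the sand automaton `S`:
`λ_S(x,y) = +1` if `x = +∞ ∧ y ≠ -∞`, `-1` if `x ≠ +∞ ∧ y = -∞`, `0` otherwise. -/
def lamS (v : Fin 2 → EZ) : ℤ :=
  if v 0 = ⊤ ∧ v 1 ≠ ⊥ then 1
  else if v 0 ≠ ⊤ ∧ v 1 = ⊥ then -1
  else 0

lemma finVal_ne_bot (n : ℤ) : finVal n ≠ ⊥ := by simp [finVal]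
lemma finVal_ne_top (n : ℤ) : finVal n ≠ ⊤ := by
  simp [finVal]
lemma finVal_lt_iff {a b : ℤ} : finVal a < finVal b ↔ a < b := by
  simp [finVal]
lemma finVal_inj {a b : ℤ} : finVal a = finVal b ↔ a = b := by
  simp [finVal]
lemma valZ_finVal (n : ℤ) : valZ (finVal n) = n := rfl
lemma refH_finVal (n : ℤ) : refH (finVal n) = n := by
  simp [refH, finVal_ne_bot, finVal_ne_top, valZ_finVal]

lemma beta_finVal (m n : ℤ) : beta 1 m (finVal n) =
    if m + 1 < n then ⊤ else if n < m - 1 then ⊥ else finVal (n - m) := by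
  simp only [beta, Nat.cast_one, finVal_lt_iff]
  rfl

def step (a m b : ℤ) : ℤ :=
  if m + 1 < a ∧ ¬ b < m - 1 then 1 else if ¬ m + 1 < a ∧ b < m - 1 then -1 else 0

lemma globalF_apply (g : ℤ → ℤ) (i : ℤ) :
    globalF 1 lamS (fun j => finVal (g j)) i
      = finVal (g i + step (g (i - 1)) (g i) (g (i + 1))) := by
  have h0 : nbhd 1 (fun j => finVal (g j)) i 0 = beta 1 (g i) (finVal (g (i - 1))) := by
    simp [nbhd, refH_finVal, show i + -1 = i - 1 from by ring]
  have h1 : nbhd 1 (fun j => finVal (g j)) i 1 = beta 1 (g i) (finVal (g (i + 1))) := by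
    simp [nbhd, refH_finVal]
  simp only [globalF, finVal_ne_bot, finVal_ne_top, or_self, if_false, valZ_finVal]
  congr 1
  congr 1
  simp only [lamS, h0, h1, beta_finVal, step]
  split_ifs with p1 p2 p3 p4 p5 p6 p7 p8 p9 p10 <;>
    simp_all [finVal_ne_bot, finVal_ne_top] <;> omega

example : True := trivial

def gF : ℤ → ℤ := fun i => if i = 0 then 1 else if i = 1 then -1 else 0
def gP : ℤ → ℤ := fun i => if i % 2 = 0 then -1 else 1

lemma img0 : globalF 1 lamS (fun _ => finVal 0) = fun _ => finVal 0 := by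
  funext i
  have h := globalF_apply (fun _ => 0) i
  simpa [step] using h

lemma imgF : globalF 1 lamS (fun j => finVal (gF j)) = fun _ => finVal 0 := by
  funext i
  rw [globalF_apply, finVal_inj]
  have h : i = -1 ∨ i = 0 ∨ i = 1 ∨ i = 2 ∨
      (i - 1 ≠ 0 ∧ i - 1 ≠ 1 ∧ i ≠ 0 ∧ i ≠ 1 ∧ i + 1 ≠ 0 ∧ i + 1 ≠ 1) := by omega
  rcases h with h | h | h | h | ⟨h1, h2, h3, h4, h5, h6⟩ <;>
    first
      | (subst h; norm_num [gF, step])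
      | (simp [gF, step, h1, h2, h3, h4, h5, h6])

lemma imgP : globalF 1 lamS (fun j => finVal (gP j)) = fun _ => finVal 0 := by
  funext i
  rw [globalF_apply, finVal_inj]
  rcases Int.emod_two_eq i with h | h
  · have h1 : (i - 1) % 2 = 1 := by omega
    have h2 : (i + 1) % 2 = 1 := by omega
    norm_num [gP, h, h1, h2, step]
  · have h1 : (i - 1) % 2 = 0 := by omega
    have h2 : (i + 1) % 2 = 0 := by omega
    norm_num [gP, h, h1, h2, step]

lemma fin0 : FiniteConf (fun _ => finVal 0) := ⟨0, fun _ _ => rfl⟩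
lemma finF : FiniteConf (fun j => finVal (gF j)) := by
  refine ⟨2, fun i hi => ?_⟩
  have h1 : i ≠ 0 := by rintro rfl; norm_num at hi
  have h2 : i ≠ 1 := by rintro rfl; norm_num at hi
  simp [gF, h1, h2]
lemma per0 : PeriodicConf (fun _ => finVal 0) := ⟨1, one_ne_zero, fun _ => rfl⟩
lemma perP : PeriodicConf (fun j => finVal (gP j)) := by
  refine ⟨2, two_ne_zero, fun i => ?_⟩
  have h : (i + 2) % 2 = i % 2 := by omega
  simp [gP, h]
lemma neF : (fun j => finVal (gF j)) ≠ (fun _ => finVal (0 : ℤ)) := by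
  intro h
  have := congrFun h 0
  simp [gF, finVal_inj] at this
lemma neP : (fun j => finVal (gP j)) ≠ (fun _ => finVal (0 : ℤ)) := by
  intro h
  have := congrFun h 0
  simp [gP, finVal_inj] at this

/-- `f_S` is not injective, not `F`-injective and not `P`-injective: there are two
distinct finite configurations with the same image under `f_S`, and two distinct
periodic configurations with the same image under `f_S`. -/
theorem S_not_injective :
    ¬ Function.Injective (globalF 1 lamS) ∧
    ¬ Set.InjOn (globalF 1 lamS) {c : Config | FiniteConf c} ∧
    ¬ Set.InjOn (globalF 1 lamS) {c : Config | PeriodicConf c} ∧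
    (∃ c c' : Config, c ≠ c' ∧ FiniteConf c ∧ FiniteConf c' ∧
      globalF 1 lamS c = globalF 1 lamS c') ∧
    (∃ c c' : Config, c ≠ c' ∧ PeriodicConf c ∧ PeriodicConf c' ∧
      globalF 1 lamS c = globalF 1 lamS c') := by
  have hF : globalF 1 lamS (fun j => finVal (gF j)) = globalF 1 lamS (fun _ => finVal 0) := by
    rw [imgF, img0]
  have hP : globalF 1 lamS (fun j => finVal (gP j)) = globalF 1 lamS (fun _ => finVal 0) := by
    rw [imgP, img0]
  refine ⟨fun h => neF (h hF), fun h => neF (h finF fin0 hF),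
    fun h => neP (h perP per0 hP),
    ⟨_, _, neF, finF, fin0, hF⟩, ⟨_, _, neP, perP, per0, hP⟩⟩
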